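/- Let A be a noetherian commutative ring that is 𝔞-adically complete, P = F_dec(Z, A) the module of 𝔞-adically decaying functions on a set Z, and N a finitely generated A-module. Then the canonical homomorphism P ⊗_A N → lim_k (P_k ⊗_{A_k} N_k) is bijective, where A_k = A/𝔞^{k+1}, P_k = A_k ⊗_A P, N_k = A_k ⊗_A N. -/

import Mathlib

set_option maxHeartbeats 1000000
set_option synthInstance.maxHeartbeats 400000


open scoped TensorProduct
universe u_krull

/-- The module `P = F_dec(Z, A)` of `𝔞`-adically decaying functions `Z → A`:
functions `f` such that `{z | f z ∉ 𝔞^{k+1}}` is finite for every `k`. -/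
def decayingFnsSelf {A : Type*} [CommRing A] (a : Ideal A) (Z : Type*) :
    Submodule A (Z → A) where
  carrier := { f | ∀ k : ℕ, { z | f z ∉ a ^ (k + 1) }.Finite }
  add_mem' := fun {f g} hf hg k => by
    refine ((hf k).union (hg k)).subset fun z hz => ?_
    by_contra h
    simp only [Set.mem_union, Set.mem_setOf_eq, not_or, not_not] at h
    exact hz (Ideal.add_mem _ h.1 h.2)
  zero_mem' := fun k =>
    Set.finite_empty.subset fun z hz => (hz (Ideal.zero_mem _)).elim
  smul_mem' := fun r f hf k => by
    refine (hf k).subset fun z hz => ?_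
    intro h
    exact hz (Ideal.mul_mem_left _ r h)


open scoped TensorProduct

section Pi
variable {A : Type*} [CommRing A] (I : Ideal A)
variable {ι : Type*} [Fintype ι] [DecidableEq ι] {M : Type*} [AddCommGroup M] [Module A M]

lemma pi_smul_top_mem_iff (x : ι → M) :
    x ∈ (I • ⊤ : Submodule A (ι → M)) ↔ ∀ i, x i ∈ (I • ⊤ : Submodule A M) := by
  constructor
  · intro hx i
    have := Submodule.mem_map_of_mem (f := LinearMap.proj (R := A) (φ := fun _ : ι => M) i) hx
    rw [Submodule.map_smul''] at this
    exact Submodule.smul_mono le_rfl le_top this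
  · intro hx
    have : x = ∑ i, Pi.single i (x i) := by
      ext j; simp [Finset.sum_apply, Pi.single_apply]
    rw [this]
    refine Submodule.sum_mem _ fun i _ => ?_
    have := Submodule.mem_map_of_mem
      (f := LinearMap.single A (fun _ : ι => M) i) (hx i)
    rw [Submodule.map_smul''] at this
    exact Submodule.smul_mono le_rfl le_top this

lemma ideal_smul_top_self : (I • ⊤ : Submodule A A) = I := by
  rw [Ideal.smul_eq_mul, Ideal.mul_top]

end Pi

section Decay
variable {A : Type*} [CommRing A] (a : Ideal A) {Z : Type*}

lemma decaying_notin_finite (f : decayingFnsSelf a Z) (k : ℕ) :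
    { z | (f : Z → A) z ∉ a ^ (k + 1) }.Finite := f.2 k

/-- evaluation at `z` as a linear map -/
def evalAt (z : Z) : decayingFnsSelf a Z →ₗ[A] A :=
  (LinearMap.proj z) ∘ₗ (decayingFnsSelf a Z).subtype

lemma decaying_mem_smul_top_iff [IsNoetherianRing A] [IsHausdorff a A] (k : ℕ)
    (f : decayingFnsSelf a Z) :
    f ∈ (a ^ k • ⊤ : Submodule A (decayingFnsSelf a Z)) ↔ ∀ z, (f : Z → A) z ∈ a ^ k := by
  constructor
  · intro hf z
    have := Submodule.mem_map_of_mem (f := evalAt a z) hf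
    rw [Submodule.map_smul''] at this
    have h3 : (a ^ k • Submodule.map (evalAt a z) ⊤ : Submodule A A) ≤ a ^ k • ⊤ :=
      smul_mono_right _ le_top
    have h4 := h3 this
    rwa [Ideal.smul_eq_mul, Ideal.mul_top] at h4
  · intro hv
    classical
    obtain ⟨s, hs⟩ : (a ^ k).FG := IsNoetherian.noetherian _
    have haus : ∀ x : A, (∀ n : ℕ, x ∈ a ^ n) → x = 0 := by
      intro x hx
      refine IsHausdorff.haus (inferInstance : IsHausdorff a A) x fun n => ?_
      rw [SModEq.zero, Ideal.smul_eq_mul, Ideal.mul_top]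
      exact hx n
    have claim : ∀ z, ∃ c : ↥(s : Set A) →₀ A,
        (c.sum fun i t => t • (i : A)) = (f : Z → A) z ∧
        ∀ j : ℕ, (f : Z → A) z ∈ a ^ (k + j) → ∀ i, c i ∈ a ^ j := by
      intro z
      by_cases h0 : (f : Z → A) z = 0
      · exact ⟨0, by simp [h0], fun j _ i => by simp⟩
      · have hex : ∃ n : ℕ, (f : Z → A) z ∉ a ^ (k + n) := by
          by_contra hc
          push_neg at hc
          exact h0 (haus _ fun n => Ideal.pow_le_pow_right (Nat.le_add_left n k) (hc n))
        have hspec : (f : Z → A) z ∉ a ^ (k + Nat.find hex) := Nat.find_spec hex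
        have hpos : 0 < Nat.find hex := by
          rcases Nat.eq_zero_or_pos (Nat.find hex) with h | h
          · rw [h, Nat.add_zero] at hspec; exact absurd (hv z) hspec
          · exact h
        set d := Nat.find hex - 1 with hd
        have hmem : (f : Z → A) z ∈ a ^ (k + d) := by
          by_contra hcon
          have hle := Nat.find_min' hex hcon
          omega
        have hmem' : (f : Z → A) z ∈ a ^ d • Submodule.span A (Set.range ((↑) : ↥(s:Set A) → A)) := by
          rw [Subtype.range_coe,
            show Submodule.span A ((s : Finset A) : Set A) = a ^ k from hs,
            Ideal.smul_eq_mul, ← pow_add, Nat.add_comm]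
          exact hmem
        obtain ⟨c, hc1, hc2⟩ := (Submodule.mem_ideal_smul_span_iff_exists_sum (a ^ d)
          ((↑) : ↥(s:Set A) → A) _).mp hmem'
        refine ⟨c, hc2, fun j hj i => ?_⟩
        have hjd : j ≤ d := by
          by_contra hcon
          push_neg at hcon
          exact hspec (Ideal.pow_le_pow_right (by omega) hj)
        exact Ideal.pow_le_pow_right hjd (hc1 i)
    choose c hc1 hc2 using claim
    have hgP : ∀ i : ↥(s : Set A), (fun z => c z i) ∈ decayingFnsSelf a Z := by
      intro i j
      refine (decaying_notin_finite a f (k + j)).subset fun z hz => ?_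
      exact fun hmem => hz (hc2 z (j + 1) hmem i)
    set g : ↥(s : Set A) → decayingFnsSelf a Z := fun i => ⟨fun z => c z i, hgP i⟩ with hg
    have hfsum : f = ∑ i : ↥(s : Set A), (i : A) • g i := by
      apply Subtype.ext
      have hcoe : ((∑ i : ↥(s : Set A), (i : A) • g i : decayingFnsSelf a Z) : Z → A)
          = ∑ i : ↥(s : Set A), (i : A) • ((g i : Z → A)) := by
        simp
      funext z
      rw [hcoe, Finset.sum_apply]
      have h1 := hc1 z
      rw [Finsupp.sum_fintype _ _ (fun i => by simp)] at h1
      rw [← h1]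
      exact Finset.sum_congr rfl fun i _ => by simp [g, mul_comm]
    rw [hfsum]
    refine Submodule.sum_mem _ fun i _ => Submodule.smul_mem_smul ?_ trivial
    exact hs ▸ Submodule.subset_span i.2
end Decay

section Complete
variable {A : Type*} [CommRing A] (a : Ideal A) {Z : Type*}

theorem decaying_isAdicComplete [IsNoetherianRing A] [IsAdicComplete a A] :
    IsAdicComplete a (decayingFnsSelf a Z) := by
  have hsmul : ∀ (n : ℕ) (x : A), x ∈ (a ^ n • ⊤ : Submodule A A) ↔ x ∈ a ^ n := by
    intro n x; rw [Ideal.smul_eq_mul, Ideal.mul_top]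
  refine { haus' := ?_, prec' := ?_ }
  · intro f hf
    ext z
    refine IsHausdorff.haus (inferInstance : IsHausdorff a A) ((f : Z → A) z) fun n => ?_
    rw [SModEq.zero, hsmul]
    exact (decaying_mem_smul_top_iff a n f).mp (by simpa [SModEq.zero] using hf n) z
  · intro f hf
    -- pointwise Cauchy
    have hptw : ∀ z, ∀ {m n : ℕ}, m ≤ n →
        (f m : Z → A) z ≡ (f n : Z → A) z [SMOD (a ^ m • ⊤ : Submodule A A)] := by
      intro z m n hmn
      have := hf hmn
      rw [SModEq.sub_mem] at this ⊢
      rw [hsmul]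
      have := (decaying_mem_smul_top_iff a m _).mp this z
      simpa using this
    have : ∀ z, ∃ L : A, ∀ n, (f n : Z → A) z ≡ L [SMOD (a ^ n • ⊤ : Submodule A A)] := by
      intro z
      exact IsPrecomplete.prec (inferInstance : IsPrecomplete a A) (fun {m n} h => hptw z h)
    choose L hL using this
    have hLP : L ∈ decayingFnsSelf a Z := by
      intro k
      refine (decaying_notin_finite a (f (k + 1)) k).subset fun z hz => ?_
      intro hmem
      have := hL z (k + 1)
      rw [SModEq.sub_mem, hsmul] at this
      exact hz (by simpa using Submodule.sub_mem _ hmem this)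
    refine ⟨⟨L, hLP⟩, fun n => ?_⟩
    rw [SModEq.sub_mem, decaying_mem_smul_top_iff]
    intro z
    have := hL z n
    rw [SModEq.sub_mem, hsmul] at this
    simpa using this

theorem pi_isAdicComplete {ι : Type*} [Fintype ι] [DecidableEq ι]
    {M : Type*} [AddCommGroup M] [Module A M] [IsAdicComplete a M] :
    IsAdicComplete a (ι → M) := by
  refine { haus' := ?_, prec' := ?_ }
  · intro f hf
    funext i
    refine IsHausdorff.haus (inferInstance : IsHausdorff a M) (f i) fun n => ?_
    rw [SModEq.zero]
    exact ((pi_smul_top_mem_iff (a ^ n) f).mp (by simpa [SModEq.zero] using hf n)) i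
  · intro f hf
    have : ∀ i, ∃ L : M, ∀ n, f n i ≡ L [SMOD (a ^ n • ⊤ : Submodule A M)] := by
      intro i
      refine IsPrecomplete.prec (inferInstance : IsPrecomplete a M) (fun {m n} h => ?_)
      have := hf h
      rw [SModEq.sub_mem] at this ⊢
      exact (pi_smul_top_mem_iff _ _).mp this i
    choose L hL using this
    refine ⟨L, fun n => ?_⟩
    rw [SModEq.sub_mem]
    rw [pi_smul_top_mem_iff]
    intro i
    have := hL i n
    rwa [SModEq.sub_mem] at this

theorem isAdicComplete_of_linearEquiv {M M' : Type*} [AddCommGroup M] [Module A M]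
    [AddCommGroup M'] [Module A M'] (e : M ≃ₗ[A] M') [IsAdicComplete a M] :
    IsAdicComplete a M' := by
  have hmap : ∀ n : ℕ, Submodule.map (e : M →ₗ[A] M') (a ^ n • ⊤) = (a ^ n • ⊤ : Submodule A M') := by
    intro n
    rw [Submodule.map_smul'', Submodule.map_top, LinearEquiv.range]
  refine { haus' := ?_, prec' := ?_ }
  · intro x hx
    have : e.symm x = 0 := by
      refine IsHausdorff.haus (inferInstance : IsHausdorff a M) _ fun n => ?_
      rw [SModEq.zero]
      have := hx n
      rw [SModEq.zero, ← hmap n] at this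
      obtain ⟨y, hy, hyx⟩ := this
      have : y = e.symm x := by
        apply e.injective; rw [LinearEquiv.apply_symm_apply]; exact hyx
      exact this ▸ hy
    have := congrArg e this
    simpa using this
  · intro f hf
    have : ∃ L, ∀ n, e.symm (f n) ≡ L [SMOD (a ^ n • ⊤ : Submodule A M)] := by
      refine IsPrecomplete.prec (inferInstance : IsPrecomplete a M) (fun {m n} h => ?_)
      have := hf h
      rw [SModEq.sub_mem] at this ⊢
      rw [← hmap m] at this
      obtain ⟨y, hy, hyx⟩ := this
      have hy' : y = e.symm (f m) - e.symm (f n) := by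
        apply e.injective
        simp only [map_sub, LinearEquiv.apply_symm_apply]
        exact hyx
      exact hy' ▸ hy
    obtain ⟨L, hL⟩ := this
    refine ⟨e L, fun n => ?_⟩
    have := hL n
    rw [SModEq.sub_mem] at this ⊢
    rw [← hmap n]
    exact ⟨e.symm (f n) - L, this, by simp⟩

theorem quotient_isPrecomplete {M : Type*} [AddCommGroup M] [Module A M]
    [IsPrecomplete a M] (K : Submodule A M) :
    IsPrecomplete a (M ⧸ K) := by
  constructor
  intro f hf
  have hsur : ∀ n, ∃ x : M, K.mkQ x = f n := fun n => K.mkQ_surjective (f n)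
  choose g hg using hsur
  -- correction terms
  have hcorr : ∀ n, ∃ u : M, u ∈ (a ^ n • ⊤ : Submodule A M) ∧ g (n + 1) - g n - u ∈ K := by
    intro n
    have h0 := hf (Nat.le_succ n)
    rw [SModEq.sub_mem] at h0
    rw [show (a ^ n • ⊤ : Submodule A (M ⧸ K)) = Submodule.map K.mkQ (a ^ n • ⊤) by
      rw [Submodule.map_smul'', Submodule.map_top, K.range_mkQ]] at h0
    have hmem : K.mkQ (g (n + 1) - g n) ∈ Submodule.map K.mkQ (a ^ n • ⊤) := by
      rw [map_sub, hg, hg]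
      simpa using Submodule.neg_mem _ h0
    obtain ⟨u, hu, huq⟩ := hmem
    refine ⟨u, hu, ?_⟩
    rw [← Submodule.ker_mkQ K, LinearMap.mem_ker, map_sub, huq, sub_self]
  choose u hu1 hu2 using hcorr
  set g' : ℕ → M := fun n => g 0 + ∑ i ∈ Finset.range n, u i with hg'
  have hcau : ∀ {m n : ℕ}, m ≤ n → g' m ≡ g' n [SMOD (a ^ m • ⊤ : Submodule A M)] := by
    intro m n hmn
    rw [SModEq.sub_mem]
    have : g' m - g' n = -∑ i ∈ Finset.Ico m n, u i := by
      show g 0 + ∑ i ∈ Finset.range m, u i - (g 0 + ∑ i ∈ Finset.range n, u i) = _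
      rw [← Finset.sum_range_add_sum_Ico _ hmn]
      abel
    rw [this]
    refine Submodule.neg_mem _ (Submodule.sum_mem _ fun i hi => ?_)
    rw [Finset.mem_Ico] at hi
    exact Submodule.smul_mono_left (Ideal.pow_le_pow_right hi.1) (hu1 i)
  obtain ⟨Lm, hLm⟩ := IsPrecomplete.prec (inferInstance : IsPrecomplete a M) hcau
  refine ⟨K.mkQ Lm, fun n => ?_⟩
  have hdiff : g n - g' n ∈ K := by
    induction n with
    | zero => simp [hg']
    | succ n ih =>
      have h2 := hu2 n
      have : g (n+1) - g' (n+1) = (g (n+1) - g n - u n) + (g n - g' n) := by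
        show g (n+1) - (g 0 + ∑ i ∈ Finset.range (n+1), u i)
            = (g (n+1) - g n - u n) + (g n - (g 0 + ∑ i ∈ Finset.range n, u i))
        rw [Finset.sum_range_succ]
        abel
      rw [this]
      exact Submodule.add_mem _ h2 ih
  have h1 : f n = K.mkQ (g' n) := by
    rw [← hg n]
    rw [show g n = g' n + (g n - g' n) by abel, map_add]
    have hz : K.mkQ (g n - g' n) = 0 := (Submodule.Quotient.mk_eq_zero K).mpr hdiff
    rw [hz, add_zero]
  rw [h1]
  have := hLm n
  rw [SModEq.sub_mem] at this ⊢
  rw [← map_sub]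
  rw [show (a ^ n • ⊤ : Submodule A (M ⧸ K)) = Submodule.map K.mkQ (a ^ n • ⊤) by
      rw [Submodule.map_smul'', Submodule.map_top, K.range_mkQ]]
  exact Submodule.mem_map_of_mem this

theorem quotient_isHausdorff_of_closed {M : Type*} [AddCommGroup M] [Module A M]
    (K : Submodule A M) (hcl : ∀ x : M, (∀ n : ℕ, x ∈ K ⊔ (a ^ n • ⊤ : Submodule A M)) → x ∈ K) :
    IsHausdorff a (M ⧸ K) := by
  constructor
  intro x hx
  obtain ⟨y, rfl⟩ := K.mkQ_surjective x
  have hy : y ∈ K := by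
    apply hcl
    intro n
    have hn := hx n
    rw [SModEq.zero, show (a ^ n • ⊤ : Submodule A (M ⧸ K)) = Submodule.map K.mkQ (a ^ n • ⊤) by
      rw [Submodule.map_smul'', Submodule.map_top, K.range_mkQ]] at hn
    obtain ⟨w, hw, hwy⟩ := hn
    have hyw : y - w ∈ K := by
      rw [← Submodule.ker_mkQ K, LinearMap.mem_ker, map_sub, hwy, sub_self]
    have := Submodule.add_mem_sup hyw hw
    simpa using this
  exact (Submodule.Quotient.mk_eq_zero K).mpr hy
end Complete

section Main
variable {A : Type*} [CommRing A] (a : Ideal A) {Z : Type*}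

lemma linearMap_coord_mem {m n : ℕ} (g : (Fin m → A) →ₗ[A] (Fin n → A)) (I : Ideal A)
    (v : Fin m → A) (hv : ∀ i, v i ∈ I) (j : Fin n) : g v j ∈ I := by
  have h1 : v ∈ (I • ⊤ : Submodule A (Fin m → A)) :=
    (pi_smul_top_mem_iff I v).mpr fun i => by
      rw [Ideal.smul_eq_mul, Ideal.mul_top]; exact hv i
  have h2 : g v ∈ (I • ⊤ : Submodule A (Fin n → A)) := by
    have hmm := Submodule.mem_map_of_mem (f := g) h1
    rw [Submodule.map_smul''] at hmm
    have hle : (I • Submodule.map g ⊤ : Submodule A (Fin n → A)) ≤ I • ⊤ :=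
      smul_mono_right _ le_top
    exact hle hmm
  have h3 := (pi_smul_top_mem_iff I (g v)).mp h2 j
  rwa [Ideal.smul_eq_mul, Ideal.mul_top] at h3

variable (Z) in
/-- apply a linear map `A^m → A^n` pointwise to decaying functions -/
noncomputable def pointwiseMap {m n : ℕ} (g : (Fin m → A) →ₗ[A] (Fin n → A)) :
    (Fin m → decayingFnsSelf a Z) →ₗ[A] (Fin n → decayingFnsSelf a Z) where
  toFun f := fun j => ⟨fun z => g (fun i => (f i : Z → A) z) j, by
    intro k
    have hsub : {z | g (fun i => (f i : Z → A) z) j ∉ a ^ (k+1)} ⊆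
        ⋃ i, {z | (f i : Z → A) z ∉ a ^ (k+1)} := by
      intro z hz
      by_contra hc
      simp only [Set.mem_iUnion, Set.mem_setOf_eq, not_exists, not_not] at hc
      exact hz (linearMap_coord_mem g _ _ hc j)
    exact (Set.finite_iUnion fun i => decaying_notin_finite a (f i) k).subset hsub⟩
  map_add' f f' := by
    funext j; apply Subtype.ext; funext z
    show g (fun i => ((f i : Z → A) z + (f' i : Z → A) z)) j = _
    have h : (fun i => ((f i : Z → A) z + (f' i : Z → A) z))
        = (fun i => (f i : Z → A) z) + (fun i => (f' i : Z → A) z) := rfl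
    rw [h, map_add]
    rfl
  map_smul' r f := by
    funext j; apply Subtype.ext; funext z
    show g (fun i => r * (f i : Z → A) z) j = _
    have h : (fun i => r * (f i : Z → A) z) = r • (fun i => (f i : Z → A) z) := rfl
    rw [h, map_smul]
    rfl

lemma pointwiseMap_compat {m n : ℕ} (g : (Fin m → A) →ₗ[A] (Fin n → A))
    (x : (decayingFnsSelf a Z) ⊗[A] (Fin m → A)) :
    TensorProduct.piScalarRight A A (decayingFnsSelf a Z) (Fin n) (LinearMap.lTensor _ g x)
      = pointwiseMap a Z g (TensorProduct.piScalarRight A A (decayingFnsSelf a Z) (Fin m) x) := by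
  induction x with
  | zero => simp
  | tmul p v =>
    rw [LinearMap.lTensor_tmul, TensorProduct.piScalarRight_apply,
      TensorProduct.piScalarRight_apply, TensorProduct.piScalarRightHom_tmul,
      TensorProduct.piScalarRightHom_tmul]
    funext j; apply Subtype.ext; funext z
    show g v j * (p : Z → A) z
      = g (fun i => ((v i • p : decayingFnsSelf a Z) : Z → A) z) j
    have h1 : (fun i => ((v i • p : decayingFnsSelf a Z) : Z → A) z) = (p : Z → A) z • v := by
      funext i
      show v i * (p : Z → A) z = (p : Z → A) z * v i
      ring
    rw [h1, map_smul]
    show g v j * (p : Z → A) z = (p : Z → A) z * g v j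
    ring
  | add x y hx hy => simp only [map_add, hx, hy]

lemma pointwiseMap_range {m n : ℕ} (g : (Fin m → A) →ₗ[A] (Fin n → A)) :
    Submodule.map (TensorProduct.piScalarRight A A (decayingFnsSelf a Z) (Fin n) : _ →ₗ[A] _)
        (LinearMap.range (LinearMap.lTensor (decayingFnsSelf a Z) g))
      = LinearMap.range (pointwiseMap a Z g) := by
  ext F
  constructor
  · rintro ⟨y, ⟨x, rfl⟩, rfl⟩
    exact ⟨TensorProduct.piScalarRight A A _ (Fin m) x, (pointwiseMap_compat a g x).symm⟩
  · rintro ⟨f, rfl⟩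
    refine ⟨LinearMap.lTensor _ g ((TensorProduct.piScalarRight A A _ (Fin m)).symm f),
      ⟨_, rfl⟩, ?_⟩
    rw [LinearEquiv.coe_coe, pointwiseMap_compat, LinearEquiv.apply_symm_apply]

theorem krull_zero {A' M : Type u_krull} [CommRing A'] (a : Ideal A')
    [IsNoetherianRing A'] [IsAdicComplete a A'] [AddCommGroup M]
    [Module A' M] [Module.Finite A' M] (x : M)
    (hx : ∀ k : ℕ, x ∈ (a ^ k • ⊤ : Submodule A' M)) : x = 0 := by
  have hmem : x ∈ (⨅ i : ℕ, a ^ i • ⊤ : Submodule A' M) := Submodule.mem_iInf _ |>.mpr hx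
  obtain ⟨r, hr⟩ := (Ideal.mem_iInf_smul_pow_eq_bot_iff (M := M) a x).mp hmem
  have hj : (r : A') ∈ (⊥ : Ideal A').jacobson := IsAdicComplete.le_jacobson_bot a r.2
  have hu : IsUnit ((r : A') * (-1) + 1) := Ideal.mem_jacobson_bot.mp hj (-1)
  have h0 : ((r : A') * (-1) + 1) • x = 0 := by
    rw [add_smul, one_smul, mul_neg_one, neg_smul, hr]
    exact neg_add_cancel x
  exact hu.smul_left_cancel.mp (by rw [h0, smul_zero])

theorem pointwiseMap_range_closed [IsNoetherianRing A] [IsAdicComplete a A] {m n : ℕ}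
    (g : (Fin m → A) →ₗ[A] (Fin n → A)) (F : Fin n → decayingFnsSelf a Z)
    (hF : ∀ k : ℕ, F ∈ LinearMap.range (pointwiseMap a Z g)
      ⊔ (a ^ k • ⊤ : Submodule A (Fin n → decayingFnsSelf a Z))) :
    F ∈ LinearMap.range (pointwiseMap a Z g) := by
  classical
  set K := LinearMap.range g with hK
  have hval : ∀ (t : ℕ) (G : Fin n → decayingFnsSelf a Z),
      G ∈ (a ^ t • ⊤ : Submodule A (Fin n → decayingFnsSelf a Z)) →
      ∀ j z, (G j : Z → A) z ∈ a ^ t := by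
    intro t G hG j z
    exact (decaying_mem_smul_top_iff a t (G j)).mp ((pi_smul_top_mem_iff _ _).mp hG j) z
  have hrange : ∀ z, (fun j => (F j : Z → A) z) ∈ K := by
    intro z
    haveI : Module.Finite A ((Fin n → A) ⧸ K) :=
      Module.Finite.of_surjective K.mkQ K.mkQ_surjective
    have hq : ∀ k : ℕ, K.mkQ (fun j => (F j : Z → A) z)
        ∈ (a ^ k • ⊤ : Submodule A ((Fin n → A) ⧸ K)) := by
      intro k
      obtain ⟨u, hu, w, hw, huw⟩ := Submodule.mem_sup.mp (hF k)
      obtain ⟨fu, rfl⟩ := hu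
      have hFz : (fun j => (F j : Z → A) z)
          = g (fun i => (fu i : Z → A) z) + (fun j => (w j : Z → A) z) := by
        funext j
        rw [← huw]
        rfl
      rw [hFz, map_add]
      have h1 : K.mkQ (g (fun i => (fu i : Z → A) z)) = 0 :=
        (Submodule.Quotient.mk_eq_zero K).mpr ⟨_, rfl⟩
      rw [h1, zero_add]
      have h2 : (fun j => (w j : Z → A) z) ∈ (a ^ k • ⊤ : Submodule A (Fin n → A)) :=
        (pi_smul_top_mem_iff _ _).mpr fun j => by
          rw [Ideal.smul_eq_mul, Ideal.mul_top]; exact hval k w hw j z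
      have h3 := Submodule.mem_map_of_mem (f := K.mkQ) h2
      rw [Submodule.map_smul''] at h3
      have hle : (a ^ k • Submodule.map K.mkQ ⊤ : Submodule A ((Fin n → A) ⧸ K))
          ≤ a ^ k • ⊤ := smul_mono_right _ le_top
      exact hle h3
    have hzero : K.mkQ (fun j => (F j : Z → A) z) = 0 := krull_zero a _ hq
    rwa [← LinearMap.mem_ker, Submodule.ker_mkQ] at hzero
  obtain ⟨c, hc⟩ := Ideal.exists_pow_inf_eq_pow_smul a K
  have hAR : ∀ (D : ℕ) (v : Fin n → A), v ∈ (a ^ D • ⊤ : Submodule A (Fin n → A)) → v ∈ K →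
      v ∈ Submodule.map g (a ^ (D - c) • ⊤ : Submodule A (Fin m → A)) := by
    intro D v hv hvK
    by_cases hD : c ≤ D
    · have h1 : v ∈ (a ^ D • ⊤ ⊓ K : Submodule A (Fin n → A)) := ⟨hv, hvK⟩
      rw [hc D hD] at h1
      have h2 : (a ^ (D - c) • (a ^ c • ⊤ ⊓ K) : Submodule A (Fin n → A)) ≤ a ^ (D - c) • K :=
        smul_mono_right _ inf_le_right
      have h3 := h2 h1
      rwa [show (a ^ (D - c) • K : Submodule A (Fin n → A))
          = Submodule.map g (a ^ (D - c) • ⊤) by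
        rw [Submodule.map_smul'', Submodule.map_top]] at h3
    · rw [show D - c = 0 by omega, pow_zero, Ideal.one_eq_top, Submodule.top_smul,
        Submodule.map_top]
      exact hvK
  have hausA : ∀ x : A, (∀ t : ℕ, x ∈ a ^ t) → x = 0 := by
    intro x hx
    refine IsHausdorff.haus (inferInstance : IsHausdorff a A) x fun t => ?_
    rw [SModEq.zero, Ideal.smul_eq_mul, Ideal.mul_top]
    exact hx t
  have claim : ∀ z, ∃ E : Fin m → A, g E = (fun j => (F j : Z → A) z) ∧
      ∀ d : ℕ, (∀ j, (F j : Z → A) z ∈ a ^ (d + c)) → ∀ i, E i ∈ a ^ d := by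
    intro z
    by_cases h0 : (fun j => (F j : Z → A) z) = (0 : Fin n → A)
    · exact ⟨0, by rw [map_zero, h0], fun d _ i => Submodule.zero_mem _⟩
    · have hex : ∃ t : ℕ, ¬ ∀ j, (F j : Z → A) z ∈ a ^ t := by
        by_contra hcon
        push_neg at hcon
        exact h0 (funext fun j => hausA _ fun t => hcon t j)
      obtain ⟨t₀, hspec, hmin⟩ : ∃ t₀ : ℕ, (¬ ∀ j, (F j : Z → A) z ∈ a ^ t₀) ∧
          ∀ t, t < t₀ → ∀ j, (F j : Z → A) z ∈ a ^ t := by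
        refine ⟨Nat.find hex, Nat.find_spec hex, fun t ht => ?_⟩
        by_contra hcon
        push_neg at hcon
        obtain ⟨j, hj⟩ := hcon
        have : Nat.find hex ≤ t := Nat.find_min' hex (fun hall => hj (hall j))
        omega
      have hpos : 0 < t₀ := by
        rcases Nat.eq_zero_or_pos t₀ with h | h
        · exact absurd (fun j => by simp [h]) hspec
        · exact h
      have hmem : ∀ j, (F j : Z → A) z ∈ a ^ (t₀ - 1) := hmin _ (by omega)
      have hvD : (fun j => (F j : Z → A) z)
          ∈ (a ^ (t₀ - 1) • ⊤ : Submodule A (Fin n → A)) :=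
        (pi_smul_top_mem_iff _ _).mpr fun j => by
          rw [Ideal.smul_eq_mul, Ideal.mul_top]; exact hmem j
      obtain ⟨E, hE1, hE2⟩ := hAR (t₀ - 1) _ hvD (hrange z)
      refine ⟨E, hE2, fun d hd i => ?_⟩
      have hlt : d + c < t₀ := by
        by_contra hcon
        push_neg at hcon
        exact hspec fun j => Ideal.pow_le_pow_right (by omega) (hd j)
      have h4 := (pi_smul_top_mem_iff _ _).mp hE1 i
      rw [Ideal.smul_eq_mul, Ideal.mul_top] at h4
      exact Ideal.pow_le_pow_right (by omega) h4
  choose E hE1 hE2 using claim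
  have hfP : ∀ i : Fin m, (fun z => E z i) ∈ decayingFnsSelf a Z := by
    intro i k
    have hsub : {z | E z i ∉ a ^ (k + 1)} ⊆ ⋃ j, {z | (F j : Z → A) z ∉ a ^ (k + c + 1)} := by
      intro z hz
      by_contra hcnt
      simp only [Set.mem_iUnion, Set.mem_setOf_eq, not_exists, not_not] at hcnt
      refine hz (hE2 z (k + 1) (fun j => ?_) i)
      have := hcnt j
      rwa [show k + c + 1 = (k + 1) + c by omega] at this
    exact (Set.finite_iUnion fun j => decaying_notin_finite a (F j) (k + c)).subset hsub
  refine ⟨fun i => ⟨fun z => E z i, hfP i⟩, ?_⟩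
  funext j; apply Subtype.ext; funext z
  show g (fun i => E z i) j = (F j : Z → A) z
  exact congrFun (hE1 z) j
end Main

/-- Let `A` be a noetherian ring, `𝔞`-adically complete, `P = F_dec(Z, A)` and `N` a
finitely generated `A`-module. Then the canonical homomorphism
`P ⊗_A N → lim_k (P_k ⊗_{A_k} N_k)` is bijective.  Since
`P_k ⊗_{A_k} N_k ≅ (P ⊗_A N)/𝔞^{k+1}(P ⊗_A N)` canonically, this says exactly that
`P ⊗_A N` is `𝔞`-adically complete. -/
theorem decaying_tensor_fg_isAdicComplete {A : Type*} [CommRing A] [IsNoetherianRing A]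
    (a : Ideal A) [IsAdicComplete a A] (Z : Type*)
    (N : Type*) [AddCommGroup N] [Module A N] [Module.Finite A N] :
    IsAdicComplete a ((↥(decayingFnsSelf a Z)) ⊗[A] N) := by
  classical
  obtain ⟨n, h, hsurj⟩ := Module.Finite.exists_fin' A N
  haveI hkerfg : Module.Finite A (LinearMap.ker h) := by
    rw [Module.Finite.iff_fg]
    exact IsNoetherian.noetherian _
  obtain ⟨m, g0, hg0⟩ := Module.Finite.exists_fin' A (LinearMap.ker h)
  set g : (Fin m → A) →ₗ[A] (Fin n → A) := (LinearMap.ker h).subtype ∘ₗ g0 with hgdef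
  have hg : LinearMap.range g = LinearMap.ker h := by
    rw [hgdef, LinearMap.range_comp, LinearMap.range_eq_top.mpr hg0, Submodule.map_top,
      Submodule.range_subtype]
  set P := decayingFnsSelf a Z with hP
  haveI hPc : IsAdicComplete a ↥P := decaying_isAdicComplete a
  haveI hPic : IsAdicComplete a (Fin n → ↥P) := pi_isAdicComplete a
  have hexact : Function.Exact (LinearMap.lTensor ↥P g) (LinearMap.lTensor ↥P h) :=
    lTensor_exact ↥P (LinearMap.exact_iff.mpr hg.symm) hsurj
  have hker : LinearMap.ker (LinearMap.lTensor ↥P h)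
      = LinearMap.range (LinearMap.lTensor ↥P g) := LinearMap.exact_iff.mp hexact
  set e1 := TensorProduct.piScalarRight A A ↥P (Fin n) with he1
  set φ : (Fin n → ↥P) →ₗ[A] (↥P ⊗[A] N) :=
    (LinearMap.lTensor ↥P h) ∘ₗ (e1.symm : (Fin n → ↥P) →ₗ[A] ↥P ⊗[A] (Fin n → A)) with hφ
  have hφsurj : Function.Surjective φ :=
    (LinearMap.lTensor_surjective ↥P hsurj).comp e1.symm.surjective
  have hkerφ : LinearMap.ker φ = LinearMap.range (pointwiseMap a Z g) := by
    rw [hφ, LinearMap.ker_comp, hker, ← Submodule.map_equiv_eq_comap_symm]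
    exact pointwiseMap_range a g
  haveI h1 : IsHausdorff a ((Fin n → ↥P) ⧸ LinearMap.ker φ) :=
    quotient_isHausdorff_of_closed a _ (fun F hFk => by
      rw [hkerφ] at hFk ⊢
      exact pointwiseMap_range_closed a g F hFk)
  haveI h2 : IsPrecomplete a ((Fin n → ↥P) ⧸ LinearMap.ker φ) :=
    quotient_isPrecomplete a _
  haveI : IsAdicComplete a ((Fin n → ↥P) ⧸ LinearMap.ker φ) :=
    { toIsHausdorff := h1, toIsPrecomplete := h2 }
  have eφ := LinearMap.quotKerEquivOfSurjective (R := A) (M := Fin n → ↥P) (M₂ := ↥P ⊗[A] N) φ hφsurj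
  exact isAdicComplete_of_linearEquiv a eφ
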